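/- For every F ⊆ E, the rank of F in M_D equals the rank of K := Ch_D(F) in the chain-decomposition matroid M_D⟨K⟩, i.e., rk_D(F) = rk_{M_D⟨K⟩}(K). -/

import Mathlib

variable {α : Type*}

/-- The rank (in `ℕ∞`) of a subset `X`: the largest size of an independent subset
of `X`. -/
noncomputable def erank (M : Matroid α) (X : Set α) : ℕ∞ :=
  ⨆ I ∈ {I : Set α | M.Indep I ∧ I ⊆ X}, I.encard

/-- A circuit of a matroid is an inclusion-wise minimal dependent set. -/
def Matroid.IsCircuit' (M : Matroid α) (C : Set α) : Prop :=
  M.Dep C ∧ ∀ ⦃D : Set α⦄, D ⊂ C → M.Indep D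

/-- The union of the levels `T 0, …, T (s-1)`. -/
def prevT (T : ℕ → Set α) (s : ℕ) : Set α := ⋃ j ∈ Finset.range s, T j

/-- The `≽`-maximal elements of `X`. -/
def heads (pref : α → α → Prop) (X : Set α) : Set α := {e ∈ X | ∀ f ∈ X, pref e f}

/-- The `≽`-minimal elements of `X`. -/
def tails (pref : α → α → Prop) (X : Set α) : Set α := {e ∈ X | ∀ f ∈ X, pref f e}

/-- `e ≻ f`: strict preference. -/
def SPref (pref : α → α → Prop) (e f : α) : Prop := pref e f ∧ ¬ pref f e

/-- The level decomposition of `F` produced by Algorithm 1: each level `T s`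
consists of the `≽`-maximal elements of what remains of `F` after removing the
earlier levels, and the levels exhaust `F`. -/
def IsLevels (pref : α → α → Prop) (F : Set α) (k : ℕ) (T : ℕ → Set α) : Prop :=
  prevT T k = F ∧ ∀ s < k, T s = heads pref (F \ prevT T s)

/-- Independence in the chain-decomposition matroid `M⟨F⟩` (the direct sum of the
minors `M_s = (M|(T 0 ∪ ⋯ ∪ T s)) / (T 0 ∪ ⋯ ∪ T (s-1))`): `I ⊆ F` and each
block `I ∩ T s` is independent in `M_s`, i.e. satisfies the contraction rank
condition `rk((I ∩ T s) ∪ prevT s) = rk(prevT s) + |I ∩ T s|`. -/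
def ChainIndep (M : Matroid α) (k : ℕ) (T : ℕ → Set α) (I : Set α) : Prop :=
  I ⊆ prevT T k ∧
  ∀ s < k, erank M ((I ∩ T s) ∪ prevT T s) = erank M (prevT T s) + (I ∩ T s).encard

/-- A base of the chain-decomposition matroid: a maximal independent set. -/
def ChainBase (M : Matroid α) (k : ℕ) (T : ℕ → Set α) (B : Set α) : Prop :=
  ChainIndep M k T B ∧ ∀ J : Set α, ChainIndep M k T J → B ⊆ J → J = B

/-- A circuit of the chain-decomposition matroid: a minimal dependent set. -/
def ChainCircuit (M : Matroid α) (k : ℕ) (T : ℕ → Set α) (C : Set α) : Prop :=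
  C ⊆ prevT T k ∧ ¬ ChainIndep M k T C ∧ ∀ ⦃D : Set α⦄, D ⊂ C → ChainIndep M k T D

/-- The greedy choice set `Ch(F)` (Algorithm 3): an element `e` of the level `T s`
belongs to `Ch(F)` iff `{e}` is independent in the contraction of `M` by the
earlier levels `T 0 ∪ ⋯ ∪ T (s-1)`. -/
def chooseSet (M : Matroid α) (k : ℕ) (T : ℕ → Set α) : Set α :=
  {e | ∃ s < k, e ∈ T s ∧ erank M ({e} ∪ prevT T s) = erank M (prevT T s) + 1}

section Aux

open Set

variable {M : Matroid α} {X Y I J : Set α} {e : α}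

/-- Every independent subset of `X` has cardinality at most that of a basis of `X`. -/
lemma indep_encard_le_of_basis' (hI : M.IsBasis' I X) (hJ : M.Indep J) (hJX : J ⊆ X) :
    J.encard ≤ I.encard := by
  obtain ⟨I', hI', hJI'⟩ := hJ.subset_isBasis'_of_subset hJX
  have h1 : (M.restrict X).IsBase I := Matroid.isBase_restrict_iff'.mpr hI
  have h2 : (M.restrict X).IsBase I' := Matroid.isBase_restrict_iff'.mpr hI'
  calc J.encard ≤ I'.encard := Set.encard_mono hJI'
    _ = I.encard := h2.encard_eq_encard_of_isBase h1

lemma erank_basis' (hI : M.IsBasis' I X) : erank M X = I.encard := by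
  apply le_antisymm
  · exact iSup₂_le fun J hJ => indep_encard_le_of_basis' hI hJ.1 hJ.2
  · exact le_iSup₂_of_le I ⟨hI.indep, hI.subset⟩ le_rfl

lemma erank_mono (h : X ⊆ Y) : erank M X ≤ erank M Y :=
  iSup₂_le fun J hJ => le_iSup₂_of_le J ⟨hJ.1, hJ.2.trans h⟩ le_rfl

lemma erank_empty (M : Matroid α) : erank M (∅ : Set α) = 0 := by
  rw [erank_basis' M.empty_indep.isBasis_self.isBasis', Set.encard_empty]

lemma erank_eq_of_subset_closure (hYX : Y ⊆ X) (hXE : X ⊆ M.E) (hXcl : X ⊆ M.closure Y) :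
    erank M X = erank M Y := by
  obtain ⟨I, hI⟩ := M.exists_isBasis Y (hYX.trans hXE)
  have hIX : M.IsBasis I X := hI.isBasis_closure_right.isBasis_subset (hI.subset.trans hYX) hXcl
  rw [erank_basis' hIX.isBasis', erank_basis' hI.isBasis']

lemma erank_insert_of_not_mem_closure (he : e ∈ M.E) (hXE : X ⊆ M.E) (h : e ∉ M.closure X) :
    erank M (insert e X) = erank M X + 1 := by
  obtain ⟨I, hI⟩ := M.exists_isBasis X hXE
  have heI : e ∉ M.closure I := by rwa [hI.closure_eq_closure]
  have hind : M.Indep (insert e I) := hI.indep.insert_indep_iff.mpr (Or.inl ⟨he, heI⟩)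
  have hB : M.IsBasis (insert e I) (insert e X) := hI.insert_isBasis_insert hind
  have heI' : e ∉ I := fun h' => heI (M.subset_closure I hI.indep.subset_ground h')
  rw [erank_basis' hB.isBasis', erank_basis' hI.isBasis', Set.encard_insert_of_notMem heI']

lemma mem_closure_of_erank_insert_ne (he : e ∈ M.E) (hXE : X ⊆ M.E)
    (h : erank M (insert e X) ≠ erank M X + 1) : e ∈ M.closure X :=
  by_contra fun hc => h (erank_insert_of_not_mem_closure he hXE hc)

lemma prevT_zero (T : ℕ → Set α) : prevT T 0 = ∅ := by simp [prevT]

lemma prevT_succ (T : ℕ → Set α) (s : ℕ) : prevT T (s + 1) = prevT T s ∪ T s := by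
  ext x
  simp only [prevT, Set.mem_iUnion, Finset.mem_range, Set.mem_union, Nat.lt_succ_iff_lt_or_eq]
  constructor
  · rintro ⟨j, hj | rfl, hx⟩
    · exact Or.inl ⟨j, hj, hx⟩
    · exact Or.inr hx
  · rintro (⟨j, hj, hx⟩ | hx)
    · exact ⟨j, Or.inl hj, hx⟩
    · exact ⟨s, Or.inr rfl, hx⟩

lemma prevT_mono (T : ℕ → Set α) {s t : ℕ} (h : s ≤ t) : prevT T s ⊆ prevT T t := by
  intro x hx
  simp only [prevT, Set.mem_iUnion, Finset.mem_range] at hx ⊢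
  obtain ⟨j, hj, hx⟩ := hx
  exact ⟨j, lt_of_lt_of_le hj h, hx⟩

lemma subset_prevT (T : ℕ → Set α) {j s : ℕ} (h : j < s) : T j ⊆ prevT T s := by
  intro x hx
  simp only [prevT, Set.mem_iUnion, Finset.mem_range]
  exact ⟨j, h, hx⟩

lemma heads_subset (pref : α → α → Prop) (X : Set α) : heads pref X ⊆ X := fun _ h => h.1

end Aux

/-- Lemma 15: with `K := Ch(F)`, the rank of `F` in `M` equals the rank of `K` in
the chain-decomposition matroid `M⟨K⟩`; that is, every base of `M⟨K⟩` has size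
`rk(F)`. -/
theorem rank_chooseSet_eq (M : Matroid α) (pref : α → α → Prop)
    (htrans : Transitive pref)
    (htotal : ∀ e ∈ M.E, ∀ f ∈ M.E, pref e f ∨ pref f e)
    (hsingle : ∀ e ∈ M.E, M.Indep {e})
    (F : Set α) (hF : F ⊆ M.E) (k : ℕ) (T : ℕ → Set α)
    (hT : IsLevels pref F k T)
    (k' : ℕ) (T' : ℕ → Set α)
    (hT' : IsLevels pref (chooseSet M k T) k' T') :
    ∀ B : Set α, ChainBase M k' T' B → erank M F = B.encard := by
  intro B hB
  obtain ⟨⟨hBsub, hBblocks⟩, hBmax⟩ := hB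
  set K := chooseSet M k T with hKdef
  -- K ⊆ F
  have hKF : K ⊆ F := by
    rintro e ⟨s, hs, heT, _⟩
    exact hT.1 ▸ subset_prevT T hs heT
  have hKE : K ⊆ M.E := hKF.trans hF
  -- prevT T s ⊆ M.E for s ≤ k
  have hPE : ∀ s ≤ k, prevT T s ⊆ M.E := fun s hs =>
    ((prevT_mono T hs).trans hT.1.subset).trans hF
  -- Step 1 : every prefix of the F-levels is spanned by its K-part
  have claim1 : ∀ s ≤ k, prevT T s ⊆ M.closure (K ∩ prevT T s) := by
    intro s
    induction s with
    | zero => intro _; rw [prevT_zero]; exact (Set.empty_subset _)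
    | succ s ih =>
      intro hs1
      have hsk : s < k := hs1
      have hsub : K ∩ prevT T s ⊆ K ∩ prevT T (s + 1) :=
        Set.inter_subset_inter_right _ (prevT_mono T (Nat.le_succ s))
      have hclmono := M.closure_subset_closure hsub
      intro e he
      rw [prevT_succ] at he
      rcases he with heP | heT
      · exact hclmono (ih (le_of_lt hsk) heP)
      · have heE : e ∈ M.E := hF (hT.1 ▸ subset_prevT T hsk heT)
        by_cases heK : e ∈ K
        · exact M.subset_closure _ ((Set.inter_subset_left).trans hKE)
            ⟨heK, subset_prevT T (Nat.lt_succ_self s) heT⟩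
        · have hne : erank M (insert e (prevT T s)) ≠ erank M (prevT T s) + 1 := by
            intro hcontra
            exact heK ⟨s, hsk, heT, by rwa [Set.singleton_union]⟩
          have hecl : e ∈ M.closure (prevT T s) :=
            mem_closure_of_erank_insert_ne heE (hPE s (le_of_lt hsk)) hne
          have : M.closure (prevT T s) ⊆ M.closure (K ∩ prevT T s) := by
            rw [← M.closure_closure (K ∩ prevT T s)]
            exact M.closure_subset_closure (ih (le_of_lt hsk))
          exact hclmono (this hecl)
  -- erank F = erank K
  have hFK : erank M F = erank M K := by
    have h1 : F ⊆ M.closure (K ∩ prevT T k) := hT.1 ▸ claim1 k le_rfl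
    rw [hT.1, Set.inter_eq_left.mpr hKF] at h1
    exact erank_eq_of_subset_closure hKF hF h1
  -- Facts about the K-levels
  have hPK : ∀ s ≤ k', prevT T' s ⊆ K := fun s hs => (prevT_mono T' hs).trans hT'.1.subset
  have hTK : ∀ s < k', T' s ⊆ K \ prevT T' s := fun s hs => hT'.2 s hs ▸ heads_subset pref _
  -- Step 2 : the prefix ranks telescope along B
  have claim2 : ∀ s ≤ k', erank M (prevT T' s) = (B ∩ prevT T' s).encard := by
    intro s
    induction s with
    | zero => intro _; rw [prevT_zero, Set.inter_empty, Set.encard_empty, erank_empty]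
    | succ s ih =>
      intro hs1
      have hsk : s < k' := hs1
      set P := prevT T' s with hPdef
      set A := B ∩ T' s with hAdef
      have hPEg : P ⊆ M.E := (hPK s (le_of_lt hsk)).trans hKE
      have hTsK : T' s ⊆ K := (hTK s hsk).trans Set.diff_subset
      have hTsE : T' s ⊆ M.E := hTsK.trans hKE
      have hTP : Disjoint (T' s) P := by
        rw [Set.disjoint_left]
        exact fun x hx => ((hTK s hsk) hx).2
      have hAP : erank M (A ∪ P) = erank M P + A.encard := hBblocks s hsk
      have hAT : A ⊆ T' s := Set.inter_subset_right
      have hAPsub : A ∪ P ⊆ T' s ∪ P := Set.union_subset_union_left _ hAT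
      have hAPE : A ∪ P ⊆ M.E := Set.union_subset (hAT.trans hTsE) hPEg
      -- maximality : A spans T' s modulo P
      have hkey : erank M (T' s ∪ P) ≤ erank M (A ∪ P) := by
        by_contra hlt
        have hnsub : ¬ (T' s ∪ P ⊆ M.closure (A ∪ P)) := by
          intro hsubcl
          exact hlt (le_of_eq (erank_eq_of_subset_closure hAPsub
            (Set.union_subset hTsE hPEg) hsubcl))
        obtain ⟨e, heTP, hecl⟩ := Set.not_subset.mp hnsub
        have heT : e ∈ T' s := by
          rcases heTP with h | h
          · exact h
          · exact absurd (M.subset_closure _ hAPE (Or.inr h)) hecl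
        have heE : e ∈ M.E := hTsE heT
        have heB : e ∉ B := fun hcon =>
          hecl (M.subset_closure _ hAPE (Or.inl ⟨hcon, heT⟩))
        -- insert e B is ChainIndep
        have hJ : ChainIndep M k' T' (insert e B) := by
          constructor
          · exact Set.insert_subset (subset_prevT T' hsk heT) hBsub
          · intro t ht
            by_cases hts : t = s
            · subst hts
              have hinter : insert e B ∩ T' t = insert e A := by
                ext x
                simp only [Set.mem_inter_iff, Set.mem_insert_iff, hAdef]
                constructor
                · rintro ⟨rfl | hxB, hxT⟩
                  · exact Or.inl rfl
                  · exact Or.inr ⟨hxB, hxT⟩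
                · rintro (rfl | ⟨hxB, hxT⟩)
                  · exact ⟨Or.inl rfl, heT⟩
                  · exact ⟨Or.inr hxB, hxT⟩
              have heA : e ∉ A := fun hcon => heB hcon.1
              rw [hinter, Set.insert_union,
                erank_insert_of_not_mem_closure heE hAPE hecl, hAP,
                Set.encard_insert_of_notMem heA, add_assoc]
            · have hdisj : e ∉ T' t := by
                intro hcon
                rcases lt_or_gt_of_ne hts with hlt' | hgt'
                · exact ((hTK s hsk) heT).2 (subset_prevT T' hlt' hcon)
                · exact ((hTK t ht) hcon).2 (subset_prevT T' hgt' heT)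
              have hinter : insert e B ∩ T' t = B ∩ T' t := by
                ext x
                simp only [Set.mem_inter_iff, Set.mem_insert_iff]
                constructor
                · rintro ⟨rfl | hxB, hxT⟩
                  · exact absurd hxT hdisj
                  · exact ⟨hxB, hxT⟩
                · rintro ⟨hxB, hxT⟩
                  exact ⟨Or.inr hxB, hxT⟩
              rw [hinter]
              exact hBblocks t ht
        have := hBmax _ hJ (Set.subset_insert e B)
        exact heB (this ▸ Set.mem_insert e B)
      have heq : erank M (T' s ∪ P) = erank M (A ∪ P) :=
        le_antisymm hkey (erank_mono hAPsub)
      -- put things together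
      have hdisjBA : Disjoint (B ∩ P) A :=
        (hTP.symm.mono Set.inter_subset_right hAT)
      calc erank M (prevT T' (s + 1))
          = erank M (T' s ∪ P) := by rw [prevT_succ, Set.union_comm]
        _ = erank M P + A.encard := by rw [heq, hAP]
        _ = (B ∩ P).encard + A.encard := by rw [ih (le_of_lt hsk)]
        _ = ((B ∩ P) ∪ A).encard := (Set.encard_union_eq hdisjBA).symm
        _ = (B ∩ prevT T' (s + 1)).encard := by
            rw [prevT_succ, Set.inter_union_distrib_left]
  -- conclusion
  have hBK : B ⊆ K := hBsub.trans hT'.1.subset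
  calc erank M F = erank M K := hFK
    _ = erank M (prevT T' k') := by rw [hT'.1]
    _ = (B ∩ prevT T' k').encard := claim2 k' le_rfl
    _ = B.encard := by rw [hT'.1, Set.inter_eq_left.mpr hBK]
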